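/- arXiv:1608.03478 — 3 statements merged into one kernel-verified Lean document; each statement's English description precedes it below -/
import Mathlib

section
/- Let C be a free abelian group with basis (g_i)_{i∈ℕ}, (m_i) positive integers, and for ω ∈ {0,1}^ℕ let N_ω = ⟨m_i g_i : ω(i)=1⟩. If ω_n → ω_∞ in the product topology on {0,1}^ℕ, then for every finite subset F of C there exists n₀ such that for all n ≥ n₀, N_{ω_n} ∩ F = N_{ω_∞} ∩ F. -/
private lemma mem_iff (C : Type*) [AddCommGroup C] (b : Module.Basis ℕ ℤ C) (m : ℕ → ℕ)
    (f : ℕ → Bool) (x : C) :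
    x ∈ AddSubgroup.closure {y : C | ∃ i : ℕ, f i = true ∧ y = (m i : ℤ) • b i} ↔
      ∀ i, (f i = false → b.repr x i = 0) ∧ (m i : ℤ) ∣ b.repr x i := by
  constructor
  · intro hx
    let Q : AddSubgroup C :=
      { carrier := {x | ∀ i, (f i = false → b.repr x i = 0) ∧ (m i : ℤ) ∣ b.repr x i}
        zero_mem' := by intro i; simp
        add_mem' := by
          intro a c ha hc i
          refine ⟨fun hfi => ?_, ?_⟩ <;> simp only [map_add, Finsupp.add_apply]
          · rw [(ha i).1 hfi, (hc i).1 hfi, add_zero]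
          · exact dvd_add (ha i).2 (hc i).2
        neg_mem' := by
          intro a ha i
          refine ⟨fun hfi => ?_, ?_⟩ <;> simp only [map_neg, Finsupp.neg_apply]
          · rw [(ha i).1 hfi, neg_zero]
          · exact dvd_neg.mpr (ha i).2 }
    refine AddSubgroup.closure_le Q |>.mpr ?_ hx
    rintro y ⟨i, hfi, rfl⟩ j
    simp only [map_smul, Finsupp.smul_apply, Module.Basis.repr_self, Finsupp.single_apply]
    constructor
    · intro hfj
      rcases eq_or_ne i j with rfl | h
      · rw [hfi] at hfj; exact absurd hfj (by simp)
      · simp [h]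
    · rcases eq_or_ne i j with rfl | h
      · simp
      · simp [h]
  · intro hx
    have hsum : ((b.repr x).sum fun i c => c • b i) = x := b.linearCombination_repr x
    rw [← hsum]
    refine AddSubgroup.sum_mem _ ?_
    intro i hi
    obtain ⟨k, hk⟩ := (hx i).2
    simp only []; rw [hk, mul_comm, mul_smul]
    have hfi : f i = true := by
      rcases hfi : f i
      · exact absurd ((hx i).1 hfi) (Finsupp.mem_support_iff.mp hi)
      · rfl
    exact AddSubgroup.zsmul_mem _ (AddSubgroup.subset_closure (show ((m i : ℤ) • b i) ∈ {y : C | ∃ i : ℕ, f i = true ∧ y = (m i : ℤ) • b i} from ⟨i, hfi, rfl⟩)) k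

/-- If `ω_n → ω_∞` in the product topology on `{0,1}^ℕ`, then for every finite
`F ⊆ C` the subgroups `N_{ω_n}` and `N_{ω_∞}` eventually agree on `F`. -/
theorem omega_subgroup_local_convergence (C : Type*) [AddCommGroup C]
    (b : Module.Basis ℕ ℤ C) (m : ℕ → ℕ) (hm : ∀ i, 1 ≤ m i)
    (ω : ℕ → ℕ → Bool) (ωinf : ℕ → Bool)
    (hconv : Filter.Tendsto ω Filter.atTop (nhds ωinf))
    (F : Finset C) :
    ∃ n₀ : ℕ, ∀ n : ℕ, n₀ ≤ n → ∀ x ∈ F,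
      (x ∈ AddSubgroup.closure {y : C | ∃ i : ℕ, ω n i = true ∧ y = (m i : ℤ) • b i} ↔
        x ∈ AddSubgroup.closure {y : C | ∃ i : ℕ, ωinf i = true ∧ y = (m i : ℤ) • b i}) := by
  set I : Finset ℕ := F.biUnion (fun x => (b.repr x).support) with hI
  have hpt : ∀ i, ∀ᶠ n in Filter.atTop, ω n i = ωinf i := by
    intro i
    have := (tendsto_pi_nhds.mp hconv) i
    rw [nhds_discrete, Filter.tendsto_pure] at this
    exact this
  have hall : ∀ᶠ n in Filter.atTop, ∀ i ∈ I, ω n i = ωinf i :=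
    (Filter.eventually_all_finset I).mpr fun i _ => hpt i
  obtain ⟨n₀, hn₀⟩ := Filter.eventually_atTop.mp hall
  refine ⟨n₀, fun n hn x hx => ?_⟩
  rw [mem_iff C b m _ x, mem_iff C b m _ x]
  have hkey : ∀ i, b.repr x i ≠ 0 → ω n i = ωinf i := fun i hi =>
    hn₀ n hn i (Finset.mem_biUnion.mpr ⟨x, hx, Finsupp.mem_support_iff.mpr hi⟩)
  constructor <;> intro h i <;> refine ⟨fun hfi => ?_, (h i).2⟩ <;>
    by_contra hne <;> [exact hne ((h i).1 (by rw [hkey i hne]; exact hfi));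
      exact hne ((h i).1 (by rw [← hkey i hne]; exact hfi))]
end

section
/- There exist a finitely generated group H and a central subgroup C of H such that C is isomorphic to the direct sum ⊕_{n∈ℕ} ℤ. -/
open Finsupp

namespace FGCentral

/-- Shift on `ℤ →₀ ℤ` by `n`. -/
noncomputable def sh (n : ℤ) : (ℤ →₀ ℤ) →ₗ[ℤ] (ℤ →₀ ℤ) :=
  Finsupp.lmapDomain ℤ ℤ (· + n)

lemma sh_single (n j b) : sh n (single j b) = single (j + n) b :=
  Finsupp.mapDomain_single

lemma sh_sh (m n : ℤ) (f : ℤ →₀ ℤ) : sh m (sh n f) = sh (n + m) f := by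
  unfold sh
  simp only [Finsupp.lmapDomain_apply]
  rw [← Finsupp.mapDomain_comp]
  congr 1
  funext i
  simp [add_assoc]

lemma sh_zero (f : ℤ →₀ ℤ) : sh 0 f = f := by
  unfold sh
  simp only [Finsupp.lmapDomain_apply]
  rw [show (fun i : ℤ => i + 0) = id by funext i; simp, Finsupp.mapDomain_id]

noncomputable def bInner (i : ℤ) : (ℤ →₀ ℤ) →ₗ[ℤ] (ℕ →₀ ℤ) :=
  Finsupp.lsum ℤ fun j => if i < j then Finsupp.lsingle ((j - i - 1).toNat) else 0

noncomputable def bB : (ℤ →₀ ℤ) →ₗ[ℤ] (ℤ →₀ ℤ) →ₗ[ℤ] (ℕ →₀ ℤ) :=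
  Finsupp.lsum ℤ fun i => LinearMap.toSpanSingleton ℤ _ (bInner i)

lemma bB_single_single (i j : ℤ) (a b : ℤ) :
    bB (single i a) (single j b) =
      if i < j then single ((j - i - 1).toNat) (a * b) else 0 := by
  unfold bB bInner
  rw [Finsupp.lsum_single]
  simp only [LinearMap.toSpanSingleton_apply, LinearMap.smul_apply]
  rw [Finsupp.lsum_single]
  split_ifs with h
  · simp [Finsupp.smul_single, smul_eq_mul, mul_comm]
  · simp

lemma bB_sh (n : ℤ) (f g : ℤ →₀ ℤ) : bB (sh n f) (sh n g) = bB f g := by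
  induction f using Finsupp.induction_linear with
  | zero => simp
  | add f₁ f₂ h1 h2 => simp only [map_add, LinearMap.add_apply, h1, h2]
  | single i a =>
    induction g using Finsupp.induction_linear with
    | zero => simp
    | add g₁ g₂ h1 h2 => simp only [map_add, h1, h2]
    | single j b =>
      rw [sh_single, sh_single, bB_single_single, bB_single_single]
      have h1 : i + n < j + n ↔ i < j := by omega
      have h2 : (j + n - (i + n) - 1) = j - i - 1 := by omega
      rw [h2]
      simp [h1]

end FGCentral

namespace FGCentral

structure H : Type where
  z : ℕ →₀ ℤ
  f : ℤ →₀ ℤ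
  n : ℤ

noncomputable instance : Mul H :=
  ⟨fun x y => ⟨x.z + y.z + bB x.f (sh x.n y.f), x.f + sh x.n y.f, x.n + y.n⟩⟩

instance : One H := ⟨⟨0, 0, 0⟩⟩

noncomputable instance : Inv H :=
  ⟨fun x => ⟨-x.z + bB x.f x.f, -(sh (-x.n) x.f), -x.n⟩⟩

lemma mul_def (x y : H) :
    x * y = ⟨x.z + y.z + bB x.f (sh x.n y.f), x.f + sh x.n y.f, x.n + y.n⟩ := rfl

lemma one_def : (1 : H) = ⟨0, 0, 0⟩ := rfl

lemma inv_def (x : H) : x⁻¹ = ⟨-x.z + bB x.f x.f, -(sh (-x.n) x.f), -x.n⟩ := rfl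

noncomputable instance : Group H :=
  Group.ofLeftAxioms
    (fun x y w => by
      have e : ∀ v : ℤ →₀ ℤ, sh (x.n + y.n) v = sh x.n (sh y.n v) := fun v => by
        rw [sh_sh, add_comm]
      simp only [mul_def, H.mk.injEq]
      refine ⟨?_, ?_, by ring⟩
      · simp only [e, map_add, LinearMap.add_apply, bB_sh]
        abel
      · simp only [e, map_add]
        abel)
    (fun x => by
      show (⟨0,0,0⟩ : H) * x = x
      simp only [mul_def, sh_zero]
      simp)
    (fun x => by
      show (⟨-x.z + bB x.f x.f, -(sh (-x.n) x.f), -x.n⟩ : H) * x = ⟨0,0,0⟩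
      simp only [mul_def, H.mk.injEq, map_neg, LinearMap.neg_apply]
      refine ⟨?_, ?_, by ring⟩
      · simp only [bB_sh]
        abel
      · abel)
end FGCentral

namespace FGCentral

/-- Embedding of the free abelian group as a central subgroup. -/
noncomputable def iota : Multiplicative (ℕ →₀ ℤ) →* H where
  toFun z := ⟨Multiplicative.toAdd z, 0, 0⟩
  map_one' := rfl
  map_mul' z₁ z₂ := by
    simp only [mul_def, H.mk.injEq]
    refine ⟨?_, by simp, by ring⟩
    simp [toAdd_mul]

lemma iota_injective : Function.Injective iota := by
  intro a b h
  simpa [iota, H.mk.injEq] using h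

lemma iota_central (x : Multiplicative (ℕ →₀ ℤ)) : iota x ∈ Subgroup.center H := by
  rw [Subgroup.mem_center_iff]
  intro g
  simp only [iota, MonoidHom.coe_mk, OneHom.coe_mk, mul_def, map_zero, add_zero,
    LinearMap.map_zero, H.mk.injEq]
  refine ⟨by abel, by simp [sh_zero], by ring⟩

/-- generators -/
noncomputable def sgen : H := ⟨0, single 0 1, 0⟩
def tgen : H := ⟨0, 0, 1⟩

end FGCentral

namespace FGCentral

noncomputable def gens : Set H := {sgen, tgen}

noncomputable def G : Subgroup H := Subgroup.closure gens

lemma s_mem : sgen ∈ G := Subgroup.subset_closure (Or.inl rfl)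
lemma t_mem : tgen ∈ G := Subgroup.subset_closure (Or.inr rfl)

lemma tpow_mem (n : ℤ) : (⟨0, 0, n⟩ : H) ∈ G := by
  induction n using Int.induction_on with
  | zero => exact one_mem G
  | succ k ih =>
    have h : (⟨0, 0, (k : ℤ) + 1⟩ : H) = ⟨0, 0, k⟩ * tgen := by
      simp [mul_def, tgen]
    rw [h]; exact mul_mem ih t_mem
  | pred k ih =>
    have h : (⟨0, 0, -(k : ℤ) - 1⟩ : H) = ⟨0, 0, -k⟩ * tgen⁻¹ := by
      simp [mul_def, inv_def, tgen, sub_eq_add_neg]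
    rw [h]; exact mul_mem ih (inv_mem t_mem)

lemma y_mem (j : ℤ) : (⟨0, single j 1, 0⟩ : H) ∈ G := by
  have h : (⟨0, single j 1, 0⟩ : H) = ⟨0, 0, j⟩ * sgen * ⟨0, 0, -j⟩ := by
    simp only [mul_def, sgen, map_zero, LinearMap.map_zero, add_zero, zero_add,
      sh_single, H.mk.injEq, add_neg_cancel]
    refine ⟨?_, ?_, ?_⟩ <;> trivial
  rw [h]
  exact mul_mem (mul_mem (tpow_mem j) s_mem) (tpow_mem (-j))

lemma singlef_mem (j a : ℤ) : ∃ z, (⟨z, single j a, 0⟩ : H) ∈ G := by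
  induction a using Int.induction_on with
  | zero => exact ⟨0, by rw [show (single j (0:ℤ)) = 0 from single_zero j]; exact one_mem G⟩
  | succ a ih =>
    obtain ⟨z, hz⟩ := ih
    refine ⟨z + bB (single j a) (single j 1), ?_⟩
    have h : (⟨z + bB (single j a) (single j 1), single j ((a : ℤ) + 1), 0⟩ : H) =
        ⟨z, single j a, 0⟩ * ⟨0, single j 1, 0⟩ := by
      simp only [mul_def, sh_zero, add_zero, zero_add, map_zero, H.mk.injEq]
      refine ⟨trivial, ?_, by trivial⟩
      rw [← single_add]
    rw [h]; exact mul_mem hz (y_mem j)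
  | pred a ih =>
    obtain ⟨z, hz⟩ := ih
    refine ⟨z + bB (single j (-a)) (single j (-1)), ?_⟩
    have hinv : (⟨0, single j 1, 0⟩ : H)⁻¹ = ⟨0, single j (-1), 0⟩ := by
      simp only [inv_def, neg_zero, sh_zero, bB_single_single, lt_self_iff_false,
        if_false, add_zero, H.mk.injEq, ← Finsupp.single_neg]
    have h : (⟨z + bB (single j (-a)) (single j (-1)), single j (-(a : ℤ) - 1), 0⟩ : H) =
        ⟨z, single j (-a), 0⟩ * ⟨0, single j (-1), 0⟩ := by
      simp only [mul_def, sh_zero, add_zero, zero_add, map_zero, H.mk.injEq]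
      refine ⟨trivial, ?_, by trivial⟩
      rw [show -(a:ℤ) - 1 = -a + -1 by ring, ← single_add]
    rw [h, ← hinv]; exact mul_mem hz (inv_mem (y_mem j))

lemma central_single_mem (n : ℕ) : (⟨single n 1, 0, 0⟩ : H) ∈ G := by
  set u : H := ⟨0, single 0 1, 0⟩ with hu
  set v : H := ⟨0, single ((n : ℤ) + 1) 1, 0⟩ with hv
  have huv : u * v * (v * u)⁻¹ = ⟨single n 1, 0, 0⟩ := by
    have b1 : bB (single (0:ℤ) 1) (single ((n:ℤ)+1) 1) = single n 1 := by
      rw [bB_single_single]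
      have : (0:ℤ) < (n:ℤ) + 1 := by positivity
      simp only [if_pos this, one_mul]
      congr 1
      omega
    have b2 : bB (single ((n:ℤ)+1) 1) (single (0:ℤ) 1) = 0 := by
      rw [bB_single_single]
      have : ¬ ((n:ℤ) + 1 < 0) := by omega
      simp [this]
    simp only [hu, hv, mul_def, inv_def, sh_zero, map_zero, LinearMap.map_zero,
      add_zero, zero_add, neg_zero, b1, b2, map_add, LinearMap.add_apply, map_neg,
      LinearMap.neg_apply, H.mk.injEq]
    refine ⟨?_, by abel, trivial⟩
    abel
  rw [← huv]
  have hv' : v ∈ G := y_mem _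
  have hu' : u ∈ G := y_mem _
  exact mul_mem (mul_mem hu' hv') (inv_mem (mul_mem hv' hu'))

lemma central_mem (z : ℕ →₀ ℤ) : (⟨z, 0, 0⟩ : H) ∈ G := by
  induction z using Finsupp.induction with
  | zero => exact one_mem G
  | single_add n a f _ _ ih =>
    have hpow : (⟨single n a, 0, 0⟩ : H) ∈ G := by
      have : (⟨single n a, 0, 0⟩ : H) = (⟨single n 1, 0, 0⟩ : H) ^ a := by
        have : ((⟨single n 1, 0, 0⟩ : H)) = iota (Multiplicative.ofAdd (single n 1)) := rfl
        rw [this, ← map_zpow]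
        simp only [iota, MonoidHom.coe_mk, OneHom.coe_mk, H.mk.injEq]
        refine ⟨?_, trivial, trivial⟩
        rw [← ofAdd_zsmul, toAdd_ofAdd, smul_single, smul_eq_mul, mul_one]
      rw [this]
      exact zpow_mem (central_single_mem n) a
    have h : (⟨single n a + f, 0, 0⟩ : H) = ⟨single n a, 0, 0⟩ * ⟨f, 0, 0⟩ := by
      simp [mul_def]
    rw [h]; exact mul_mem hpow ih

lemma closure_gens : G = ⊤ := by
  rw [eq_top_iff]
  rintro ⟨z, f, n⟩ -
  obtain ⟨z1, hz1⟩ : ∃ z1, (⟨z1, f, 0⟩ : H) ∈ G := by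
    induction f using Finsupp.induction with
    | zero => exact ⟨0, one_mem G⟩
    | single_add j a f' _ _ ih =>
      obtain ⟨z2, hz2⟩ := ih
      obtain ⟨z3, hz3⟩ := singlef_mem j a
      refine ⟨z3 + z2 + bB (single j a) f', ?_⟩
      have h : (⟨z3 + z2 + bB (single j a) f', single j a + f', 0⟩ : H) =
          ⟨z3, single j a, 0⟩ * ⟨z2, f', 0⟩ := by
        simp [mul_def, sh_zero]
      rw [h]; exact mul_mem hz3 hz2
  have h1 : (⟨z1, f, n⟩ : H) ∈ G := by
    have h : (⟨z1, f, n⟩ : H) = ⟨z1, f, 0⟩ * ⟨0, 0, n⟩ := by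
      simp [mul_def]
    rw [h]; exact mul_mem hz1 (tpow_mem n)
  have h2 : (⟨z, f, n⟩ : H) = ⟨z - z1, 0, 0⟩ * ⟨z1, f, n⟩ := by
    simp [mul_def, sh_zero]
  rw [h2]
  exact mul_mem (central_mem _) h1

end FGCentral

/-- There is a finitely generated group `H` with a central subgroup isomorphic to
the free abelian group `⊕_{n∈ℕ} ℤ`. -/
theorem exists_fg_group_with_central_free_abelian_subgroup :
    ∃ (H : Type) (_ : Group H) (S : Finset H),
      Subgroup.closure (S : Set H) = ⊤ ∧
        ∃ C : Subgroup H, C ≤ Subgroup.center H ∧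
          Nonempty (C ≃* Multiplicative (ℕ →₀ ℤ)) := by
  classical
  refine ⟨FGCentral.H, inferInstance, {FGCentral.sgen, FGCentral.tgen}, ?_, ?_⟩
  · have : (({FGCentral.sgen, FGCentral.tgen} : Finset FGCentral.H) : Set FGCentral.H) =
        FGCentral.gens := by
      simp [FGCentral.gens]
    rw [this]
    exact FGCentral.closure_gens
  · refine ⟨FGCentral.iota.range, ?_, ⟨(MonoidHom.ofInjective FGCentral.iota_injective).symm⟩⟩
    rintro x ⟨y, rfl⟩
    exact FGCentral.iota_central y
end

section
/- Let G be a group generated by a finite set S and N a normal subgroup of G. Every self-avoiding walk in the Cayley graph of G/N with respect to the image of S lifts to a self-avoiding walk in the Cayley graph of (G, S); consequently the number of self-avoiding walks of length n from the identity in Cay(G/N, S̄) is at most that in Cay(G, S), and hence μ(Cay(G/N, S̄)) ≤ μ(Cay(G, S)). -/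
/-- The Cayley graph of `(G, S)`: vertices are elements of `G`, and `g ~ h` iff
`g ≠ h` and `g⁻¹ * h ∈ S ∪ S⁻¹`. -/
def cayleyGraph (G : Type*) [Group G] (S : Set G) : SimpleGraph G where
  Adj g h := g ≠ h ∧ g⁻¹ * h ∈ S ∪ S⁻¹
  symm := by
    constructor
    rintro g h ⟨hne, hmem⟩
    refine ⟨hne.symm, ?_⟩
    have he : h⁻¹ * g = (g⁻¹ * h)⁻¹ := by group
    rw [he]
    rcases hmem with hs | hs
    · exact Or.inr (Set.inv_mem_inv.mpr hs)
    · exact Or.inl (Set.mem_inv.mp hs)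
  loopless := ⟨fun g h => h.1 rfl⟩

/-- The number of self-avoiding walks (paths) of length `n` starting at `o`. -/
noncomputable def sawCount {V : Type*} (G : SimpleGraph V) (o : V) (n : ℕ) : ℕ :=
  Nat.card {p : Σ v : V, G.Walk o v // p.2.IsPath ∧ p.2.length = n}

open SimpleGraph

lemma sigma_walk_eq_of_support_eq {V : Type*} {G : SimpleGraph V} :
    ∀ {u v w : V} (p : G.Walk u v) (q : G.Walk u w), p.support = q.support →
      (⟨v, p⟩ : Σ x, G.Walk u x) = ⟨w, q⟩ := by
  intro u v w p q h
  induction p generalizing w with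
  | nil =>
    cases q with
    | nil => rfl
    | cons hb q' =>
      rw [Walk.support_nil, Walk.support_cons] at h
      exact absurd (List.cons.inj h).2.symm q'.support_ne_nil
  | cons ha p ih =>
    cases q with
    | nil =>
      rw [Walk.support_nil, Walk.support_cons] at h
      exact absurd (List.cons.inj h).2 p.support_ne_nil
    | cons hb q' =>
      rw [Walk.support_cons, Walk.support_cons] at h
      have hsup := (List.cons.inj h).2
      have hsup2 := hsup
      rw [p.support_eq_cons, q'.support_eq_cons] at hsup2
      obtain ⟨hbb, -⟩ := List.cons.inj hsup2
      subst hbb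
      have := ih q' hsup
      injection this with h1 h2
      subst h1
      rw [eq_of_heq h2]

lemma support_eq_of_steps_eq {G : Type*} [Group G] {S : Set G} :
    ∀ {u v w : G} (p : (cayleyGraph G S).Walk u v) (q : (cayleyGraph G S).Walk u w),
      p.darts.map (fun d => d.toProd.1⁻¹ * d.toProd.2)
        = q.darts.map (fun d => d.toProd.1⁻¹ * d.toProd.2) →
      p.support = q.support := by
  intro u v w p q h
  induction p generalizing w with
  | nil =>
    cases q with
    | nil => rfl
    | cons hb q' => simp [Walk.darts_cons, Walk.darts_nil] at h
  | cons ha p ih =>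
    cases q with
    | nil => simp [Walk.darts_cons, Walk.darts_nil] at h
    | cons hb q' =>
      rw [Walk.darts_cons, Walk.darts_cons, List.map_cons, List.map_cons] at h
      obtain ⟨h1, h2⟩ := List.cons.inj h
      have hbb := mul_left_cancel h1
      subst hbb
      rw [Walk.support_cons, Walk.support_cons, ih q' h2]

lemma saw_finite {G : Type*} [Group G] (S : Finset G) (n : ℕ) :
    Finite {p : Σ v : G, (cayleyGraph G (S : Set G)).Walk 1 v //
      p.2.IsPath ∧ p.2.length = n} := by
  set T : Set G := (S : Set G) ∪ (S : Set G)⁻¹ with hT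
  have hTfin : T.Finite := S.finite_toSet.union S.finite_toSet.inv
  have : Finite T := hTfin.to_subtype
  set φ : {p : Σ v : G, (cayleyGraph G (S : Set G)).Walk 1 v //
      p.2.IsPath ∧ p.2.length = n} → (Fin n → T) := fun p i =>
    have hlen : p.1.2.darts.length = n := by
      rw [Walk.length_darts, p.2.2]
    let d := p.1.2.darts.get (Fin.cast hlen.symm i)
    ⟨d.toProd.1⁻¹ * d.toProd.2, d.adj.2⟩ with hφ
  refine Finite.of_injective φ fun p q hpq => ?_
  have hlp : p.1.2.darts.length = n := by rw [Walk.length_darts, p.2.2]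
  have hlq : q.1.2.darts.length = n := by rw [Walk.length_darts, q.2.2]
  have hsteps : p.1.2.darts.map (fun d => d.toProd.1⁻¹ * d.toProd.2)
      = q.1.2.darts.map (fun d => d.toProd.1⁻¹ * d.toProd.2) := by
    refine List.ext_get (by simp [hlp, hlq]) fun i hi1 hi2 => ?_
    have := congrFun hpq ⟨i, by simpa [hlp] using hi1⟩
    simp only [hφ] at this
    have := congrArg Subtype.val this
    simpa using this
  have := sigma_walk_eq_of_support_eq p.1.2 q.1.2
    (support_eq_of_steps_eq p.1.2 q.1.2 hsteps)
  exact Subtype.ext (by simpa using this)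



lemma lift_walk {G : Type*} [Group G] (S : Finset G) (N : Subgroup G) [N.Normal] :
    ∀ {a v : G ⧸ N}
      (p : (cayleyGraph (G ⧸ N) ((QuotientGroup.mk : G → G ⧸ N) '' S)).Walk a v)
      (g : G), (QuotientGroup.mk g : G ⧸ N) = a →
      ∃ (w : G) (q : (cayleyGraph G (S : Set G)).Walk g w),
        q.length = p.length ∧ (QuotientGroup.mk w : G ⧸ N) = v ∧
          q.support.map (QuotientGroup.mk : G → G ⧸ N) = p.support := by
  intro a v p
  induction p with
  | nil =>
    intro g hg
    exact ⟨g, Walk.nil, rfl, hg, by simp [hg]⟩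
  | @cons a b v hab p ih =>
    intro g hg
    obtain ⟨hne, hmem⟩ := hab
    obtain ⟨s, hs, hmk⟩ :
        ∃ s : G, s ∈ (S : Set G) ∪ (S : Set G)⁻¹ ∧
          (QuotientGroup.mk s : G ⧸ N) = a⁻¹ * b := by
      rcases hmem with ⟨s, hsS, hsm⟩ | hinv
      · exact ⟨s, Or.inl hsS, hsm⟩
      · obtain ⟨s, hsS, hsm⟩ := Set.mem_inv.mp hinv
        refine ⟨s⁻¹, Or.inr (by simpa using hsS), ?_⟩
        have : (QuotientGroup.mk s : G ⧸ N) = (a⁻¹ * b)⁻¹ := hsm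
        simp [this]
    have hgb : (QuotientGroup.mk (g * s) : G ⧸ N) = b := by
      have : (QuotientGroup.mk (g * s) : G ⧸ N)
          = QuotientGroup.mk g * QuotientGroup.mk s := rfl
      rw [this, hg, hmk, mul_inv_cancel_left]
    have hadj : (cayleyGraph G (S : Set G)).Adj g (g * s) := by
      refine ⟨fun hcontr => hne ?_, by simpa using hs⟩
      rw [← hg, hcontr, hgb]
    obtain ⟨w, q, hlen, hw, hsupp⟩ := ih (g * s) hgb
    exact ⟨w, Walk.cons hadj q, by simp [hlen]; rfl, hw, by simp [hsupp, hg]; rfl⟩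

/-- Self-avoiding walks in the Cayley graph of a quotient lift to self-avoiding
walks in the Cayley graph of the group; consequently the SAW counts, and hence the
connective constants, can only decrease when passing to a quotient. -/
theorem saw_quotient_lift_and_mu_le (G : Type*) [Group G] (S : Finset G)
    (hgen : Subgroup.closure (S : Set G) = ⊤) (N : Subgroup G) [N.Normal] :
    (∀ (v : G ⧸ N) (p : (cayleyGraph (G ⧸ N) ((QuotientGroup.mk : G → G ⧸ N) '' S)).Walk
        (1 : G ⧸ N) v), p.IsPath →
      ∃ (w : G) (q : (cayleyGraph G (S : Set G)).Walk (1 : G) w), q.IsPath ∧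
        q.length = p.length ∧ (QuotientGroup.mk w : G ⧸ N) = v ∧
          q.support.map (QuotientGroup.mk : G → G ⧸ N) = p.support) ∧
    (∀ n : ℕ, sawCount (cayleyGraph (G ⧸ N) ((QuotientGroup.mk : G → G ⧸ N) '' S)) 1 n ≤
        sawCount (cayleyGraph G (S : Set G)) 1 n) ∧
    ∀ μ₁ μ₂ : ℝ,
      Filter.Tendsto (fun n : ℕ =>
          (sawCount (cayleyGraph (G ⧸ N) ((QuotientGroup.mk : G → G ⧸ N) '' S)) 1 n : ℝ)
            ^ (1 / (n : ℝ))) Filter.atTop (nhds μ₁) →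
      Filter.Tendsto (fun n : ℕ =>
          (sawCount (cayleyGraph G (S : Set G)) 1 n : ℝ) ^ (1 / (n : ℝ)))
        Filter.atTop (nhds μ₂) →
      μ₁ ≤ μ₂ := by
  have hlift : ∀ (v : G ⧸ N)
      (p : (cayleyGraph (G ⧸ N) ((QuotientGroup.mk : G → G ⧸ N) '' S)).Walk
        (1 : G ⧸ N) v), p.IsPath →
      ∃ (w : G) (q : (cayleyGraph G (S : Set G)).Walk (1 : G) w), q.IsPath ∧
        q.length = p.length ∧ (QuotientGroup.mk w : G ⧸ N) = v ∧
          q.support.map (QuotientGroup.mk : G → G ⧸ N) = p.support := by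
    intro v p hp
    obtain ⟨w, q, hlen, hw, hsupp⟩ := lift_walk S N p 1 rfl
    refine ⟨w, q, ?_, hlen, hw, hsupp⟩
    rw [Walk.isPath_def]
    have hnd : (q.support.map (QuotientGroup.mk : G → G ⧸ N)).Nodup := by
      rw [hsupp]; exact hp.support_nodup
    exact hnd.of_map _
  have hcount : ∀ n : ℕ,
      sawCount (cayleyGraph (G ⧸ N) ((QuotientGroup.mk : G → G ⧸ N) '' S)) 1 n ≤
        sawCount (cayleyGraph G (S : Set G)) 1 n := by
    intro n
    have hfin := saw_finite S n
    have key : ∀ x : {p : Σ v : G ⧸ N,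
        (cayleyGraph (G ⧸ N) ((QuotientGroup.mk : G → G ⧸ N) '' S)).Walk 1 v //
        p.2.IsPath ∧ p.2.length = n},
        ∃ y : {p : Σ v : G, (cayleyGraph G (S : Set G)).Walk 1 v //
          p.2.IsPath ∧ p.2.length = n},
        y.1.2.support.map (QuotientGroup.mk : G → G ⧸ N) = x.1.2.support := by
      rintro ⟨⟨v, p⟩, hp, hn⟩
      obtain ⟨w, q, hq, hlen, hw, hsupp⟩ := hlift v p hp
      exact ⟨⟨⟨w, q⟩, hq, by rw [hlen, hn]⟩, hsupp⟩
    refine Nat.card_le_card_of_injective (fun x => (key x).choose) ?_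
    intro x y hxy
    have hx := (key x).choose_spec
    have hy := (key y).choose_spec
    rw [show (key x).choose = (key y).choose from hxy, hy] at hx
    exact Subtype.ext (sigma_walk_eq_of_support_eq x.1.2 y.1.2 hx.symm)
  refine ⟨hlift, hcount, ?_⟩
  intro μ₁ μ₂ h1 h2
  refine le_of_tendsto_of_tendsto' h1 h2 fun n => ?_
  exact Real.rpow_le_rpow (by positivity) (by exact_mod_cast hcount n) (by positivity)
end
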